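/- Let (Ω, μ) be a measure space, let p* be a real number with 1 < p* < ∞, and let (u_n) and u be real-valued measurable functions on Ω such that u_n → u almost everywhere, sup_n ‖u_n‖_{L^{p*}(μ)} < ∞, and u ∈ L^{p*}(μ). Then for every v ∈ L^{p*}(μ), ∫_Ω |u_n|^(p*−2)·u_n·v dμ → ∫_Ω |u|^(p*−2)·u·v dμ as n → ∞. -/

import Mathlib

open MeasureTheory Filter

/-- Weak convergence claim (2.8) in the proof of Lemma 2.1: an a.e. convergent, bounded
sequence in L^{p*} satisfies |u_n|^{p*−2}u_n ⇀ |u|^{p*−2}u against every v ∈ L^{p*}. -/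
theorem stmt_16 {Ω : Type*} [MeasurableSpace Ω] (μ : Measure Ω)
    (ps : ℝ) (hps : 1 < ps)
    (u : ℕ → Ω → ℝ) (ulim : Ω → ℝ)
    (hu_meas : ∀ n, Measurable (u n)) (hulim_meas : Measurable ulim)
    (hae : ∀ᵐ x ∂μ, Tendsto (fun n => u n x) atTop (nhds (ulim x)))
    (hbdd : ⨆ n, eLpNorm (u n) (ENNReal.ofReal ps) μ < ⊤)
    (hulim : MemLp ulim (ENNReal.ofReal ps) μ) :
    ∀ v : Ω → ℝ, MemLp v (ENNReal.ofReal ps) μ →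
      Tendsto (fun n => ∫ x, |u n x| ^ (ps - 2) * u n x * v x ∂μ) atTop
        (nhds (∫ x, |ulim x| ^ (ps - 2) * ulim x * v x ∂μ)) := by
  intro v hv
  have hps0 : (0:ℝ) < ps := by linarith
  have hps1 : (0:ℝ) < ps - 1 := by linarith
  set q : ℝ := ps / (ps - 1) with hq_def
  have hq0 : (0:ℝ) < q := div_pos hps0 hps1
  set rp : ENNReal := ENNReal.ofReal ps with hrp_def
  set rq : ENNReal := ENNReal.ofReal q with hrq_def
  have hrp_ne_top : rp ≠ ⊤ := ENNReal.ofReal_ne_top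
  have hrp_one : (1 : ENNReal) ≤ rp := by
    rw [hrp_def, ← ENNReal.ofReal_one]
    exact ENNReal.ofReal_le_ofReal hps.le
  -- conjugate exponents
  have hconj : (1 : ENNReal) / 1 = 1 / rq + 1 / rp := by
    rw [hrp_def, hrq_def, one_div, one_div, one_div,
      ← ENNReal.ofReal_inv_of_pos hq0, ← ENNReal.ofReal_inv_of_pos hps0,
      ← ENNReal.ofReal_add (by positivity) (by positivity), inv_one]
    rw [show q⁻¹ + ps⁻¹ = 1 by
      rw [hq_def]; field_simp; ring]
    exact ENNReal.ofReal_one.symm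
  -- the nonlinearity
  set F : ℝ → ℝ := fun t => |t| ^ (ps - 2) * t with hF_def
  have habsF : ∀ t : ℝ, |F t| = |t| ^ (ps - 1) := by
    intro t
    rcases eq_or_ne t 0 with rfl | ht
    · simp [hF_def, Real.zero_rpow (by linarith : ps - 1 ≠ 0)]
    · have h1 : |t| ≠ 0 := abs_ne_zero.mpr ht
      have h2 : ps - 1 = ps - 2 + 1 := by ring
      rw [h2, Real.rpow_add_one h1, hF_def]
      rw [abs_mul, abs_of_nonneg (Real.rpow_nonneg (abs_nonneg t) _)]
  have hFcont : Continuous F := by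
    rw [continuous_iff_continuousAt]
    intro t
    rcases eq_or_ne t 0 with rfl | ht
    · have hF0 : F 0 = 0 := by simp [hF_def]
      rw [ContinuousAt, hF0]
      have hg : Tendsto (fun s : ℝ => |s| ^ (ps - 1)) (nhds 0) (nhds 0) := by
        have := (Real.continuousAt_rpow_const |(0:ℝ)| (ps - 1) (Or.inr hps1.le)).comp
          continuous_abs.continuousAt (x := (0:ℝ))
        have h2 : Tendsto (fun s : ℝ => |s| ^ (ps - 1)) (nhds 0) (nhds (|(0:ℝ)| ^ (ps - 1))) :=
          this
        simpa [abs_zero, Real.zero_rpow (by linarith : ps - 1 ≠ 0)] using h2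
      exact squeeze_zero_norm (fun s => by rw [Real.norm_eq_abs, habsF s]) hg
    · have h1 : |t| ≠ 0 := abs_ne_zero.mpr ht
      exact ((Real.continuousAt_rpow_const |t| (ps - 2) (Or.inl h1)).comp
        continuous_abs.continuousAt).mul continuousAt_id
  -- eLpNorm of the nonlinearity
  have hFnorm : ∀ w : Ω → ℝ,
      eLpNorm (fun x => F (w x)) rq μ = eLpNorm w rp μ ^ (ps - 1) := by
    intro w
    have h1 : eLpNorm (fun x => F (w x)) rq μ
        = eLpNorm (fun x => ‖w x‖ ^ (ps - 1)) rq μ := by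
      rw [← eLpNorm_norm (fun x => F (w x))]
      congr 1
      ext x
      rw [Real.norm_eq_abs, habsF, Real.norm_eq_abs]
    have h2 : rq * ENNReal.ofReal (ps - 1) = rp := by
      rw [hrq_def, ← ENNReal.ofReal_mul hq0.le, hq_def,
        div_mul_cancel₀ _ (by linarith : ps - 1 ≠ 0)]
    rw [h1, eLpNorm_norm_rpow w hps1, h2]
  -- uniform bound
  set M : ENNReal := (⨆ n, eLpNorm (u n) rp μ) ^ (ps - 1) with hM_def
  have hM_lt : M < ⊤ := ENNReal.rpow_lt_top_of_nonneg hps1.le hbdd.ne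
  have hM_bound : ∀ n, eLpNorm (fun x => F (u n x)) rq μ ≤ M := by
    intro n
    rw [hFnorm]
    exact ENNReal.rpow_le_rpow (le_iSup (fun n => eLpNorm (u n) rp μ) n) hps1.le
  -- the sequence and its limit
  set g : ℕ → Ω → ℝ := fun n x => F (u n x) * v x with hg_def
  set G : Ω → ℝ := fun x => F (ulim x) * v x with hG_def
  have hgmeas : ∀ n, AEStronglyMeasurable (g n) μ := fun n =>
    ((hFcont.measurable.comp (hu_meas n)).aestronglyMeasurable).mul hv.1
  -- Hölder
  have hHolder : ∀ (φ w : Ω → ℝ), AEStronglyMeasurable φ μ → AEStronglyMeasurable w μ →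
      eLpNorm (fun x => φ x * w x) 1 μ ≤ eLpNorm φ rq μ * eLpNorm w rp μ := by
    intro φ w hφ hw
    have := eLpNorm_smul_le_mul_eLpNorm (μ := μ) (p := rq) (q := rp) (r := 1) (f := w) hw (φ := φ) hφ
      (hpqr := ⟨by simpa [one_div] using hconj.symm⟩)
    exact this
  -- MemLp of the limit and of the sequence in L¹
  have hFulim : MemLp (fun x => F (ulim x)) rq μ := by
    refine ⟨(hFcont.measurable.comp hulim_meas).aestronglyMeasurable, ?_⟩
    rw [hFnorm]
    exact ENNReal.rpow_lt_top_of_nonneg hps1.le hulim.2.ne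
  have hG1 : MemLp G 1 μ := by
    refine ⟨hFulim.1.mul hv.1, ?_⟩
    exact lt_of_le_of_lt (hHolder _ _ hFulim.1 hv.1)
      (ENNReal.mul_lt_top hFulim.2 hv.2)
  have hg1 : ∀ n, MemLp (g n) 1 μ := by
    intro n
    refine ⟨hgmeas n, ?_⟩
    refine lt_of_le_of_lt (hHolder _ _
      (hFcont.measurable.comp (hu_meas n)).aestronglyMeasurable hv.1) ?_
    exact ENNReal.mul_lt_top (lt_of_le_of_lt (hM_bound n) hM_lt) hv.2
  -- key indicator bound
  have hind_bound : ∀ (n : ℕ) (s : Set Ω), MeasurableSet s →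
      eLpNorm (s.indicator (g n)) 1 μ ≤ M * eLpNorm (s.indicator v) rp μ := by
    intro n s hs
    have hind : s.indicator (g n) = fun x => F (u n x) * s.indicator v x := by
      ext x
      by_cases hx : x ∈ s <;>
        simp [hg_def, Set.indicator_of_mem, Set.indicator_of_notMem, hx]
    rw [hind]
    exact le_trans (hHolder _ _ (hFcont.measurable.comp (hu_meas n)).aestronglyMeasurable
      (hv.1.indicator hs))
      (mul_le_mul' (hM_bound n) le_rfl)
  -- uniform integrability
  have hui : UnifIntegrable g 1 μ := by
    intro ε hε
    set η : ENNReal := ENNReal.ofReal ε / (M + 1) with hη_def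
    have hη_ne : η ≠ 0 := by
      apply ENNReal.div_ne_zero.mpr
      exact ⟨by simpa using hε, by simp [hM_lt.ne]⟩
    have hη_lt : η < ⊤ :=
      lt_of_le_of_lt (ENNReal.div_le_div_left (le_add_self : 1 ≤ M + 1) _)
        (by simp)
    have hMη : M * η ≤ ENNReal.ofReal ε := by
      calc M * η ≤ (M + 1) * η := mul_le_mul' (le_add_right le_rfl) le_rfl
        _ ≤ ENNReal.ofReal ε := by rw [hη_def]; exact ENNReal.mul_div_le
    have hηtop : ENNReal.ofReal η.toReal = η := ENNReal.ofReal_toReal hη_lt.ne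
    have hηpos : 0 < η.toReal := ENNReal.toReal_pos hη_ne hη_lt.ne
    obtain ⟨δ, hδpos, hδ⟩ := hv.eLpNorm_indicator_le hrp_one hrp_ne_top hηpos
    refine ⟨δ, hδpos, fun n s hs hμs => ?_⟩
    refine le_trans (hind_bound n s hs) ?_
    refine le_trans (mul_le_mul' le_rfl ?_) hMη
    rw [← hηtop]
    exact hδ s hs hμs
  -- uniform tightness
  have hut : UnifTight g 1 μ := by
    intro ε hε
    set η : ENNReal := (ε : ENNReal) / (M + 1) with hη_def
    have hη_ne : η ≠ 0 := by
      apply ENNReal.div_ne_zero.mpr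
      exact ⟨by simpa using hε.ne', by simp [hM_lt.ne]⟩
    have hMη : M * η ≤ (ε : ENNReal) := by
      calc M * η ≤ (M + 1) * η := mul_le_mul' (le_add_right le_rfl) le_rfl
        _ ≤ (ε : ENNReal) := by rw [hη_def]; exact ENNReal.mul_div_le
    obtain ⟨s, hsm, hμs, hslt⟩ := hv.exists_eLpNorm_indicator_compl_lt hrp_ne_top hη_ne
    refine ⟨s, hμs.ne, fun n => ?_⟩
    refine le_trans (hind_bound n sᶜ hsm.compl) ?_
    exact le_trans (mul_le_mul' le_rfl hslt.le) hMη
  -- a.e. convergence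
  have haeg : ∀ᵐ x ∂μ, Tendsto (fun n => g n x) atTop (nhds (G x)) := by
    filter_upwards [hae] with x hx
    exact ((hFcont.tendsto _).comp hx).mul_const _
  -- Vitali convergence theorem
  have hL1 : Tendsto (fun n => eLpNorm (g n - G) 1 μ) atTop (nhds 0) :=
    tendsto_Lp_of_tendsto_ae le_rfl ENNReal.one_ne_top hgmeas hG1 hui hut haeg
  -- conclude
  have hfin : Tendsto (fun n => ∫ x, g n x ∂μ) atTop (nhds (∫ x, G x ∂μ)) := by
    refine tendsto_integral_of_L1 G (memLp_one_iff_integrable.mp hG1).aestronglyMeasurable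
      (Eventually.of_forall fun n => memLp_one_iff_integrable.mp (hg1 n)) ?_
    have : ∀ n, (∫⁻ x, ‖g n x - G x‖ₑ ∂μ) = eLpNorm (g n - G) 1 μ := by
      intro n
      rw [eLpNorm_one_eq_lintegral_enorm]
      rfl
    simpa [this] using hL1
  exact hfin
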